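/- Let H be a model graph and let a, b, c, d be positive integers with n = a+b+c+d. There exists a simple undirected graph G on n vertices with exactly Σ_{(p,q) ∈ Full(H)} (#p)·(#q) edges that admits an H-partition with |V_A| = a, |V_B| = b, |V_C| = c, |V_D| = d, where #p denotes the class size corresponding to label p. Moreover, no graph with strictly fewer edges admits such an H-partition with these class sizes. That is, m_min^H(a,b,c,d) = Σ_{(p,q) ∈ Full(H)} (#p)·(#q). -/

import Mathlib

inductive Label : Type
  | A | B | C | D
deriving DecidableEq

instance instFintypeLabel : Fintype Label where
  elems := {Label.A, Label.B, Label.C, Label.D}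
  complete := by intro x; cases x <;> simp

/-- A model graph: an undirected graph on the four labels A,B,C,D, each edge
marked full or dotted (never both), symmetric and irreflexive. -/
structure ModelGraph : Type where
  full : Label → Label → Bool
  dotted : Label → Label → Bool
  full_symm : ∀ p q, full p q = full q p
  dotted_symm : ∀ p q, dotted p q = dotted q p
  full_irrefl : ∀ p, full p p = false
  dotted_irrefl : ∀ p, dotted p p = false
  not_both : ∀ p q, ¬ (full p q = true ∧ dotted p q = true)

/-- `ℓ` is an `H`-partition of `G`: all four classes nonempty, full edges of `H`
force complete adjacency, dotted edges force complete nonadjacency. -/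
def IsHPartition {V : Type} (G : SimpleGraph V) (H : ModelGraph) (ℓ : V → Label) : Prop :=
  (∀ p : Label, ∃ v, ℓ v = p) ∧
  (∀ u v, H.full (ℓ u) (ℓ v) = true → G.Adj u v) ∧
  (∀ u v, H.dotted (ℓ u) (ℓ v) = true → ¬ G.Adj u v)

/-- Label `p` is possible for vertex `v` relative to the partial labeling `pl`. -/
def Possible {V : Type} (G : SimpleGraph V) (H : ModelGraph)
    (pl : V → Option Label) (v : V) (p : Label) : Prop :=
  (∀ q y, H.full p q = true → pl y = some q → G.Adj v y) ∧
  (∀ q y, H.dotted p q = true → pl y = some q → ¬ G.Adj v y)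

/-- Full-edge neighborhood of a set of labels. -/
def NFull (H : ModelGraph) (L : Finset Label) : Finset Label :=
  Finset.univ.filter (fun q => ∃ p ∈ L, H.full p q = true)

/-- Dotted-edge neighborhood of a set of labels. -/
def NDotted (H : ModelGraph) (L : Finset Label) : Finset Label :=
  Finset.univ.filter (fun q => ∃ p ∈ L, H.dotted p q = true)

/-- Class sizes `a,b,c,d` as a function of the label. -/
def cnt (a b c d : ℕ) : Label → ℕ
  | .A => a | .B => b | .C => c | .D => d

/-- Auxiliary graph: join vertices whose labels form a full edge. -/
def mkGraph (H : ModelGraph) {W : Type} (ℓ : W → Label) : SimpleGraph W where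
  Adj u v := H.full (ℓ u) (ℓ v) = true
  symm := by constructor; intro u v h; rw [H.full_symm]; exact h
  loopless := by constructor; intro v h; simp [H.full_irrefl] at h

instance mkGraphDec (H : ModelGraph) {W : Type} (ℓ : W → Label) :
    DecidableRel (mkGraph H ℓ).Adj := fun _ _ => inferInstanceAs (Decidable (_ = true))

lemma degree_mkGraph {W : Type} [Fintype W] [DecidableEq W] (H : ModelGraph) (ℓ : W → Label)
    (v : W) :
    (mkGraph H ℓ).degree v =
      ∑ q : Label, if H.full (ℓ v) q = true then (Finset.univ.filter (fun u => ℓ u = q)).card else 0 := by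
  classical
  rw [← SimpleGraph.card_neighborFinset_eq_degree]
  have : (mkGraph H ℓ).neighborFinset v = Finset.univ.filter (fun u => H.full (ℓ v) (ℓ u) = true) := by
    ext u; rw [SimpleGraph.mem_neighborFinset]; simp [mkGraph]
  rw [this, Finset.card_eq_sum_card_fiberwise (f := ℓ) (t := Finset.univ) (fun x _ => Finset.mem_univ _)]
  refine Finset.sum_congr rfl (fun q _ => ?_)
  rw [Finset.filter_filter]
  have key : Finset.filter (fun a => H.full (ℓ v) (ℓ a) = true ∧ ℓ a = q) Finset.univ =
      if H.full (ℓ v) q = true then Finset.filter (fun u => ℓ u = q) Finset.univ else ∅ := by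
    split_ifs with h
    · ext u
      simp only [Finset.mem_filter, Finset.mem_univ, true_and]
      exact ⟨And.right, fun hq => ⟨by rw [hq]; exact h, hq⟩⟩
    · rw [Finset.filter_eq_empty_iff]
      rintro u _ ⟨hf, hq⟩
      rw [hq] at hf; exact h hf
  rw [key]
  split_ifs <;> simp

lemma two_mul_edges {W : Type} [Fintype W] [DecidableEq W] (H : ModelGraph) (ℓ : W → Label) :
    2 * (mkGraph H ℓ).edgeFinset.card =
      ∑ p : Label, ∑ q : Label,
        if H.full p q = true then
          (Finset.univ.filter (fun u => ℓ u = p)).card *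
          (Finset.univ.filter (fun u => ℓ u = q)).card else 0 := by
  classical
  rw [← SimpleGraph.sum_degrees_eq_twice_card_edges]
  have h1 : ∀ v : W, (mkGraph H ℓ).degree v =
      ∑ q : Label, if H.full (ℓ v) q = true then (Finset.univ.filter (fun u => ℓ u = q)).card else 0 :=
    degree_mkGraph H ℓ
  calc ∑ v, (mkGraph H ℓ).degree v
      = ∑ v : W, ∑ q : Label, if H.full (ℓ v) q = true then (Finset.univ.filter (fun u => ℓ u = q)).card else 0 := by
        exact Finset.sum_congr rfl (fun v _ => h1 v)
    _ = ∑ p : Label, ∑ v ∈ Finset.univ.filter (fun u => ℓ u = p),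
          ∑ q : Label, if H.full (ℓ v) q = true then (Finset.univ.filter (fun u => ℓ u = q)).card else 0 := by
        rw [Finset.sum_fiberwise_of_maps_to (fun i _ => Finset.mem_univ (ℓ i))]
    _ = _ := by
        refine Finset.sum_congr rfl (fun p _ => ?_)
        have step : ∀ v ∈ Finset.univ.filter (fun u => ℓ u = p),
            (∑ q : Label, if H.full (ℓ v) q = true then (Finset.univ.filter (fun u => ℓ u = q)).card else 0)
            = ∑ q : Label, if H.full p q = true then (Finset.univ.filter (fun u => ℓ u = q)).card else 0 := by
          intro v hv
          have : ℓ v = p := (Finset.mem_filter.mp hv).2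
          rw [this]
        rw [Finset.sum_congr rfl step, Finset.sum_const, Finset.smul_sum]
        refine Finset.sum_congr rfl (fun q _ => ?_)
        by_cases h : H.full p q = true <;> simp [h]

lemma fin_count (n m k : ℕ) (hk : k ≤ n) :
    (Finset.univ.filter (fun v : Fin n => m ≤ v.val ∧ v.val < k)).card = k - m := by
  rw [← Nat.card_Ico m k]
  apply Finset.card_bij (fun (v : Fin n) _ => v.val)
  · intro v hv; simp only [Finset.mem_filter] at hv; simp [Finset.mem_Ico, hv.2.1, hv.2.2]
  · intro u _ v _ h; exact Fin.val_injective h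
  · intro x hx
    simp only [Finset.mem_Ico] at hx
    exact ⟨⟨x, lt_of_lt_of_le hx.2 hk⟩, by simp [hx.1, hx.2], rfl⟩

lemma class_filter_card {W : Type} [Fintype W] [DecidableEq W] (ℓ : W → Label)
    (a b c d : ℕ) (hcard : ∀ p : Label, {v | ℓ v = p}.ncard = cnt a b c d p) (p : Label) :
    (Finset.univ.filter (fun u => ℓ u = p)).card = cnt a b c d p := by
  rw [← hcard p]
  have : {v | ℓ v = p} = ↑(Finset.univ.filter (fun u => ℓ u = p)) := by ext v; simp
  rw [this, Set.ncard_coe_finset]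


/-- m_min^H(a,b,c,d) equals the sum over full edges of H of the
products of the class sizes (each unordered full edge counted once, hence the
division of the ordered-pair sum by 2). -/
theorem stmt_3 (H : ModelGraph) (a b c d : ℕ)
    (ha : 0 < a) (hb : 0 < b) (hc : 0 < c) (hd : 0 < d)
    (n : ℕ) (hn : n = a + b + c + d) :
    (∃ (G : SimpleGraph (Fin n)) (ℓ : Fin n → Label),
        IsHPartition G H ℓ ∧ (∀ p : Label, {v | ℓ v = p}.ncard = cnt a b c d p) ∧
        G.edgeSet.ncard =
          (∑ p : Label, ∑ q : Label,
            if H.full p q = true then cnt a b c d p * cnt a b c d q else 0) / 2) ∧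
    (∀ (W : Type) (G : SimpleGraph W) (ℓ : W → Label),
        IsHPartition G H ℓ → (∀ p : Label, {v | ℓ v = p}.ncard = cnt a b c d p) →
        (∑ p : Label, ∑ q : Label,
            if H.full p q = true then cnt a b c d p * cnt a b c d q else 0) / 2
          ≤ G.edgeSet.ncard) := by
  constructor
  · -- existence
    set ℓ0 : Fin n → Label := fun v =>
      if v.val < a then .A else if v.val < a + b then .B
      else if v.val < a + b + c then .C else .D with hℓ0
    have hiff : ∀ (v : Fin n) (p : Label), ℓ0 v = p ↔
        (match p with
         | .A => 0 ≤ v.val ∧ v.val < a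
         | .B => a ≤ v.val ∧ v.val < a + b
         | .C => a + b ≤ v.val ∧ v.val < a + b + c
         | .D => a + b + c ≤ v.val ∧ v.val < n) := by
      intro v p
      have hv := v.isLt
      cases p <;> simp only [hℓ0] <;> split_ifs <;> simp <;> omega
    have hfcard : ∀ p : Label, (Finset.univ.filter (fun u => ℓ0 u = p)).card = cnt a b c d p := by
      intro p
      cases p
      · rw [Finset.filter_congr (fun v _ => by rw [hiff v Label.A]), fin_count n 0 a (by omega)]
        simp [cnt]
      · rw [Finset.filter_congr (fun v _ => by rw [hiff v Label.B]), fin_count n a (a+b) (by omega)]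
        simp [cnt]
      · rw [Finset.filter_congr (fun v _ => by rw [hiff v Label.C]), fin_count n (a+b) (a+b+c) (by omega)]
        simp [cnt]
      · rw [Finset.filter_congr (fun v _ => by rw [hiff v Label.D]), fin_count n (a+b+c) n (by omega)]
        simp [cnt]; omega
    have hncard : ∀ p : Label, {v | ℓ0 v = p}.ncard = cnt a b c d p := by
      intro p
      have : {v | ℓ0 v = p} = ↑(Finset.univ.filter (fun u => ℓ0 u = p)) := by ext v; simp
      rw [this, Set.ncard_coe_finset, hfcard]
    refine ⟨mkGraph H ℓ0, ℓ0, ⟨?_, ?_, ?_⟩, hncard, ?_⟩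
    · intro p
      have : 0 < (Finset.univ.filter (fun u => ℓ0 u = p)).card := by
        rw [hfcard]; cases p <;> simpa [cnt]
      obtain ⟨v, hv⟩ := Finset.card_pos.mp this
      exact ⟨v, (Finset.mem_filter.mp hv).2⟩
    · intro u v h; exact h
    · intro u v h hadj
      exact H.not_both (ℓ0 u) (ℓ0 v) ⟨hadj, h⟩
    · have h2 := two_mul_edges H ℓ0
      simp only [hfcard] at h2
      rw [← SimpleGraph.coe_edgeFinset, Set.ncard_coe_finset]
      omega
  · -- lower bound
    intro W G ℓ hpart hcard
    classical
    have hfin : ∀ p : Label, {v | ℓ v = p}.Finite := by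
      intro p
      by_contra h
      have h0 : {v | ℓ v = p}.ncard = 0 := Set.Infinite.ncard h
      have := hcard p
      rw [h0] at this
      cases p <;> simp [cnt] at this <;> omega
    have huniv : (Set.univ : Set W) =
        {v | ℓ v = .A} ∪ {v | ℓ v = .B} ∪ {v | ℓ v = .C} ∪ {v | ℓ v = .D} := by
      ext v; simp only [Set.mem_univ, Set.mem_union, Set.mem_setOf_eq, true_iff]
      cases h : ℓ v <;> tauto
    have hWfin : Finite W := by
      rw [← Set.finite_univ_iff, huniv]
      exact (((hfin .A).union (hfin .B)).union (hfin .C)).union (hfin .D)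
    have : Fintype W := Fintype.ofFinite W
    have hle : mkGraph H ℓ ≤ G := fun {u v} h => hpart.2.1 u v h
    have hsub : (mkGraph H ℓ).edgeSet ⊆ G.edgeSet := SimpleGraph.edgeSet_mono hle
    have hGfin : G.edgeSet.Finite := Set.toFinite _
    have h2 := two_mul_edges H ℓ
    simp only [class_filter_card ℓ a b c d hcard] at h2
    have hmk : (mkGraph H ℓ).edgeSet.ncard =
        (∑ p : Label, ∑ q : Label,
          if H.full p q = true then cnt a b c d p * cnt a b c d q else 0) / 2 := by
      rw [← SimpleGraph.coe_edgeFinset, Set.ncard_coe_finset]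
      omega
    calc (∑ p : Label, ∑ q : Label,
          if H.full p q = true then cnt a b c d p * cnt a b c d q else 0) / 2
        = (mkGraph H ℓ).edgeSet.ncard := hmk.symm
      _ ≤ G.edgeSet.ncard := Set.ncard_le_ncard hsub hGfin
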